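/- For every partition p of a finite nonempty set X there exists a partition q of X with p ⊥ q. Concretely, choosing one representative from each block of p and letting q consist of the block of all representatives together with singletons for all remaining elements yields a partition orthogonal to p. -/

import Mathlib

/-! Multigraphs: a multigraph is given by a vertex type, an edge index type,
and two endpoint maps. -/
structure Multigraph (V : Type*) (E : Type*) where
  fst : E → V
  snd : E → V

namespace Multigraph

variable {V E : Type*} (G : Multigraph V E)

/-- `u` and `v` are joined by some edge. -/
def Adj (u v : V) : Prop :=
  ∃ e, (G.fst e = u ∧ G.snd e = v) ∨ (G.fst e = v ∧ G.snd e = u)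

/-- Reachability by walks. -/
def Reachable (u v : V) : Prop := Relation.ReflTransGen G.Adj u v

/-- A multigraph is connected if it is nonempty and every two vertices are
joined by a walk. -/
def Connected : Prop := Nonempty V ∧ ∀ u v : V, G.Reachable u v

/-- A multigraph contains a cycle iff it contains a nontrivial closed trail
(a closed walk with pairwise distinct edges); in particular a pair of parallel
edges is a cycle. -/
def HasCycle : Prop :=
  ∃ (n : ℕ) (v : Fin (n + 1) → V) (e : Fin n → E),
    1 ≤ n ∧ Function.Injective e ∧
    (∀ i : Fin n,
      (G.fst (e i) = v i.castSucc ∧ G.snd (e i) = v i.succ) ∨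
      (G.fst (e i) = v i.succ ∧ G.snd (e i) = v i.castSucc)) ∧
    v 0 = v (Fin.last n)

/-- A multigraph is acyclic if it contains no cycle. -/
def Acyclic : Prop := ¬ G.HasCycle

/-- Number of connected components. -/
noncomputable def numComponents : ℕ := Nat.card (Quot G.Reachable)

end Multigraph

/-- A partition of the finite set `X`. -/
abbrev Partn (X : Type*) [Fintype X] [DecidableEq X] := Finpartition (Finset.univ : Finset X)

namespace Partn

variable {X : Type*} [Fintype X] [DecidableEq X]

/-- The block of `p` containing `i`. -/
noncomputable def blk (p : Partn X) (i : X) : Finset X :=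
  p.parts.choose (i ∈ ·) (p.existsUnique_mem (Finset.mem_univ i))

lemma blk_mem (p : Partn X) (i : X) : p.blk i ∈ p.parts :=
  Finset.choose_mem _ _ _

lemma mem_blk (p : Partn X) (i : X) : i ∈ p.blk i :=
  Finset.choose_property (i ∈ ·) _ _

end Partn

/-- The incidence graph of two partitions `p`, `q` of `X`: vertices are the
blocks of `p` together with the blocks of `q`, and each element `i ∈ X`
contributes one edge joining the `p`-block and the `q`-block containing it. -/
noncomputable def IncGraph {X : Type*} [Fintype X] [DecidableEq X] (p q : Partn X) :
    Multigraph ({b // b ∈ p.parts} ⊕ {b // b ∈ q.parts}) X where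
  fst i := Sum.inl ⟨p.blk i, p.blk_mem i⟩
  snd i := Sum.inr ⟨q.blk i, q.blk_mem i⟩

/-- Weak orthogonality: the incidence graph is acyclic. -/
def WOrth {X : Type*} [Fintype X] [DecidableEq X] (p q : Partn X) : Prop :=
  (IncGraph p q).Acyclic

/-- Orthogonality: the incidence graph is connected and acyclic. -/
def Orth {X : Type*} [Fintype X] [DecidableEq X] (p q : Partn X) : Prop :=
  (IncGraph p q).Connected ∧ (IncGraph p q).Acyclic


section Aux

variable {X : Type*} [Fintype X] [DecidableEq X]

lemma Partn.blk_eq_of_mem (p : Partn X) {b : Finset X} {i : X}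
    (hb : b ∈ p.parts) (hi : i ∈ b) : p.blk i = b :=
  (p.existsUnique_mem (Finset.mem_univ i)).unique ⟨p.blk_mem i, p.mem_blk i⟩ ⟨hb, hi⟩

lemma Partn.mem_blk_iff (p : Partn X) (i j : X) : j ∈ p.blk i ↔ j ∈ p.part i := by
  rw [p.blk_eq_of_mem (p.part_mem.2 (Finset.mem_univ i)) (p.mem_part (Finset.mem_univ i))]

lemma orth_key [Nonempty X] (p : Partn X) (rep : Finset X → X) (hrep : ∀ b ∈ p.parts, rep b ∈ b)
    (s : Setoid X) (inst : DecidableRel s.r)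
    (hs : ∀ i j, s.r i j ↔ (i = j ∨ (i ∈ p.parts.image rep ∧ j ∈ p.parts.image rep))) :
    Orth p (@Finpartition.ofSetoid X _ _ s inst) := by
  classical
  set R : Finset X := p.parts.image rep with hR
  set q : Partn X := @Finpartition.ofSetoid X _ _ s inst with hq
  -- membership in blocks of q
  have F1 : ∀ i j : X, j ∈ q.blk i ↔ (i = j ∨ (i ∈ R ∧ j ∈ R)) := by
    intro i j
    rw [q.mem_blk_iff, hq, Finpartition.mem_part_ofSetoid_iff_rel, hs]
  have F2 : ∀ i : X, i ∈ R → q.blk i = R := by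
    intro i hi
    ext j
    rw [F1]
    constructor
    · rintro (rfl | ⟨_, h⟩) <;> [exact hi; exact h]
    · intro h; exact Or.inr ⟨hi, h⟩
  have F3 : ∀ i : X, i ∉ R → q.blk i = {i} := by
    intro i hi
    ext j
    rw [F1, Finset.mem_singleton]
    constructor
    · rintro (rfl | ⟨h, _⟩) <;> [rfl; exact absurd h hi]
    · rintro rfl; exact Or.inl rfl
  have F4 : ∀ (x : X) (b : Finset X), x ∈ R → b ∈ p.parts → x ∈ b → x = rep b := by
    intro x b hxR hb hxb
    obtain ⟨b', hb', rfl⟩ := Finset.mem_image.1 hxR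
    have := p.eq_of_mem_parts hb hb' hxb (hrep b' hb')
    rw [this]
  -- R is a block of q
  obtain ⟨x0⟩ := ‹Nonempty X›
  have hr0 : rep (p.blk x0) ∈ R := Finset.mem_image_of_mem _ (p.blk_mem x0)
  have hRq : R ∈ q.parts := by
    rw [← F2 _ hr0]; exact q.blk_mem _
  set hub : ({b // b ∈ p.parts} ⊕ {b // b ∈ q.parts}) := Sum.inr ⟨R, hRq⟩ with hhub
  have fst_eq : ∀ i : X, (IncGraph p q).fst i = Sum.inl ⟨p.blk i, p.blk_mem i⟩ := fun _ => rfl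
  have snd_eq : ∀ i : X, (IncGraph p q).snd i = Sum.inr ⟨q.blk i, q.blk_mem i⟩ := fun _ => rfl
  have adj_inl : ∀ b : {b // b ∈ p.parts}, (IncGraph p q).Adj (Sum.inl b) hub := by
    rintro ⟨b, hb⟩
    refine ⟨rep b, Or.inl ⟨?_, ?_⟩⟩
    · rw [fst_eq]
      exact congrArg Sum.inl (Subtype.ext (p.blk_eq_of_mem hb (hrep b hb)))
    · rw [snd_eq, hhub]
      exact congrArg Sum.inr (Subtype.ext (F2 _ (Finset.mem_image_of_mem _ hb)))
  have reach_hub : ∀ v, (IncGraph p q).Reachable v hub := by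
    rintro (b | ⟨c, hc⟩)
    · exact Relation.ReflTransGen.single (adj_inl b)
    · obtain ⟨x, hx⟩ := q.nonempty_of_mem_parts hc
      have hcx : q.blk x = c := q.blk_eq_of_mem hc hx
      have : (IncGraph p q).Adj (Sum.inr ⟨c, hc⟩) (Sum.inl ⟨p.blk x, p.blk_mem x⟩) := by
        refine ⟨x, Or.inr ⟨rfl, ?_⟩⟩
        rw [snd_eq]
        exact congrArg Sum.inr (Subtype.ext hcx)
      exact Relation.ReflTransGen.head this (Relation.ReflTransGen.single (adj_inl _))
  have adj_symm : Symmetric (IncGraph p q).Adj := by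
    rintro u v ⟨e, h | h⟩
    exacts [⟨e, Or.inr h⟩, ⟨e, Or.inl h⟩]
  constructor
  · -- connected
    refine ⟨⟨Sum.inl ⟨p.blk x0, p.blk_mem x0⟩⟩, fun u v => ?_⟩
    exact (reach_hub u).trans ((@Relation.ReflTransGen.stdSymm _ _ ⟨adj_symm⟩).symm _ _ (reach_hub v))
  · -- acyclic
    rintro ⟨n, v, e, hn, einj, hcond, hclose⟩
    -- n ≥ 2
    have hn2 : 2 ≤ n := by
      by_contra h
      have hn1 : n = 1 := by omega
      subst hn1
      have h0 := hcond 0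
      have : v (Fin.castSucc 0) = v (Fin.succ 0) := by
        have : (Fin.succ 0 : Fin 2) = Fin.last 1 := rfl
        rw [show (Fin.castSucc 0 : Fin 2) = 0 from rfl, this, hclose]
      rcases h0 with ⟨h1, h2⟩ | ⟨h1, h2⟩ <;> rw [fst_eq] at h1 <;> rw [snd_eq] at h2
      · exact Sum.inl_ne_inr (h1.trans (this.trans h2.symm))
      · exact Sum.inl_ne_inr (h1.trans (this.symm.trans h2.symm))
    -- helper: edge incident to an inr vertex lies in its block
    have Hr : ∀ (k : Fin n) (c : {b // b ∈ q.parts}),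
        (v k.castSucc = Sum.inr c ∨ v k.succ = Sum.inr c) → q.blk (e k) = c.1 := by
      intro k c hk
      rcases hcond k with ⟨h1, h2⟩ | ⟨h1, h2⟩ <;> rw [fst_eq] at h1 <;> rw [snd_eq] at h2 <;>
        rcases hk with hk | hk
      · rw [hk] at h1; exact absurd h1 (Sum.inl_ne_inr)
      · rw [hk] at h2; exact congrArg Subtype.val (Sum.inr_injective h2)
      · rw [hk] at h2; exact congrArg Subtype.val (Sum.inr_injective h2)
      · rw [hk] at h1; exact absurd h1 (Sum.inl_ne_inr)
    have Hl : ∀ (k : Fin n) (c : {b // b ∈ p.parts}),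
        (v k.castSucc = Sum.inl c ∨ v k.succ = Sum.inl c) → p.blk (e k) = c.1 := by
      intro k c hk
      rcases hcond k with ⟨h1, h2⟩ | ⟨h1, h2⟩ <;> rw [fst_eq] at h1 <;> rw [snd_eq] at h2 <;>
        rcases hk with hk | hk
      · rw [hk] at h1; exact congrArg Subtype.val (Sum.inl_injective h1)
      · rw [hk] at h2; exact absurd h2.symm (Sum.inl_ne_inr)
      · rw [hk] at h2; exact absurd h2.symm (Sum.inl_ne_inr)
      · rw [hk] at h1; exact congrArg Subtype.val (Sum.inl_injective h1)
    -- every edge is a representative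
    have C1 : ∀ i : Fin n, e i ∈ R := by
      intro i
      by_contra hx
      have hblk : q.blk (e i) = {e i} := F3 _ hx
      -- the inr endpoint of edge i is v i.castSucc or v i.succ
      have hend : v i.castSucc = Sum.inr ⟨q.blk (e i), q.blk_mem (e i)⟩ ∨ v i.succ = Sum.inr ⟨q.blk (e i), q.blk_mem (e i)⟩ := by
        rcases hcond i with ⟨h1, h2⟩ | ⟨h1, h2⟩ <;> rw [snd_eq] at h2
        · exact Or.inr h2.symm
        · exact Or.inl h2.symm
      rcases hend with hend | hend
      · -- v i.castSucc is inr {e i}; neighbor edge also in {e i}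
        rcases Nat.eq_zero_or_pos i.val with hi0 | hi0
        · -- wrap around : v 0 = v last = v (n-1).succ
          have hk : (⟨n - 1, by omega⟩ : Fin n).succ = Fin.last n := by
            apply Fin.ext; simp; omega
          have hc0 : i.castSucc = (0 : Fin (n+1)) := by apply Fin.ext; simp [hi0]
          have hv : v (⟨n - 1, by omega⟩ : Fin n).succ = Sum.inr ⟨q.blk (e i), q.blk_mem (e i)⟩ := by
            rw [hk, ← hclose, ← hc0]; exact hend
          have h5 := (Hr _ _ (Or.inr hv)).trans hblk
          have : e ⟨n - 1, by omega⟩ = e i := by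
            have := q.mem_blk (e ⟨n - 1, by omega⟩)
            rw [h5, Finset.mem_singleton] at this; exact this
          have := einj this
          have : n - 1 = i.val := congrArg Fin.val this
          omega
        · have hk : (⟨i.val - 1, by omega⟩ : Fin n).succ = i.castSucc := by
            apply Fin.ext; simp; omega
          have hv : v (⟨i.val - 1, by omega⟩ : Fin n).succ = Sum.inr ⟨q.blk (e i), q.blk_mem (e i)⟩ := by rw [hk]; exact hend
          have h5 := (Hr _ _ (Or.inr hv)).trans hblk
          have : e ⟨i.val - 1, by omega⟩ = e i := by
            have := q.mem_blk (e ⟨i.val - 1, by omega⟩)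
            rw [h5, Finset.mem_singleton] at this; exact this
          have := einj this
          have : i.val - 1 = i.val := congrArg Fin.val this
          omega
      · rcases Nat.lt_or_ge (i.val + 1) n with hi1 | hi1
        · have hk : (⟨i.val + 1, hi1⟩ : Fin n).castSucc = i.succ := by
            apply Fin.ext; simp
          have hv : v (⟨i.val + 1, hi1⟩ : Fin n).castSucc = Sum.inr ⟨q.blk (e i), q.blk_mem (e i)⟩ := by rw [hk]; exact hend
          have h5 := (Hr _ _ (Or.inl hv)).trans hblk
          have : e ⟨i.val + 1, hi1⟩ = e i := by
            have := q.mem_blk (e ⟨i.val + 1, hi1⟩)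
            rw [h5, Finset.mem_singleton] at this; exact this
          have := einj this
          have : i.val + 1 = i.val := congrArg Fin.val this
          omega
        · -- i.succ = last; wrap to v 0 = v (0:Fin n).castSucc
          have hil : i.succ = Fin.last n := by apply Fin.ext; simp; omega
          have hk : (⟨0, by omega⟩ : Fin n).castSucc = (0 : Fin (n+1)) := by
            apply Fin.ext; simp
          have hv : v (⟨0, by omega⟩ : Fin n).castSucc = Sum.inr ⟨q.blk (e i), q.blk_mem (e i)⟩ := by
            rw [hk, hclose, ← hil]; exact hend
          have h5 := (Hr _ _ (Or.inl hv)).trans hblk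
          have : e ⟨0, by omega⟩ = e i := by
            have := q.mem_blk (e ⟨0, by omega⟩)
            rw [h5, Finset.mem_singleton] at this; exact this
          have := einj this
          have : (0 : Nat) = i.val := congrArg Fin.val this
          omega
    -- now find two distinct edges sharing an inl vertex
    have h0 := hcond ⟨0, by omega⟩
    set b : {b // b ∈ p.parts} := ⟨p.blk (e ⟨0, by omega⟩), p.blk_mem _⟩ with hb
    have hend : v (⟨0, by omega⟩ : Fin n).castSucc = Sum.inl b ∨
        v (⟨0, by omega⟩ : Fin n).succ = Sum.inl b := by
      rcases h0 with ⟨h1, h2⟩ | ⟨h1, h2⟩ <;> rw [fst_eq] at h1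
      · exact Or.inl h1.symm
      · exact Or.inr h1.symm
    have key2 : ∀ k : Fin n, k.val ≠ 0 → p.blk (e k) = b.1 → False := by
      intro k hk0 hpk
      have he0 : e ⟨0, by omega⟩ = rep b.1 :=
        F4 _ _ (C1 _) b.2 (p.mem_blk _)
      have hek : e k = rep b.1 := by
        refine F4 _ _ (C1 _) b.2 ?_
        rw [← hpk]; exact p.mem_blk _
      have := einj (hek.trans he0.symm)
      exact hk0 (congrArg Fin.val this)
    rcases hend with hend | hend
    · -- v 0 = inl b; wrap: v 0 = v last = v (n-1).succ
      have hk : (⟨n - 1, by omega⟩ : Fin n).succ = Fin.last n := by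
        apply Fin.ext; simp; omega
      have hc0 : (⟨0, by omega⟩ : Fin n).castSucc = (0 : Fin (n+1)) := by
        apply Fin.ext; simp
      have hv : v (⟨n - 1, by omega⟩ : Fin n).succ = Sum.inl b := by
        rw [hk, ← hclose, ← hc0]; exact hend
      exact key2 ⟨n - 1, by omega⟩ (by simp; omega) (Hl _ _ (Or.inr hv))
    · -- v 1 = inl b
      have hk : (⟨1, by omega⟩ : Fin n).castSucc = (⟨0, by omega⟩ : Fin n).succ := by
        apply Fin.ext; simp
      have hv : v (⟨1, by omega⟩ : Fin n).castSucc = Sum.inl b := by rw [hk]; exact hend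
      exact key2 ⟨1, by omega⟩ (by simp) (Hl _ _ (Or.inl hv))

end Aux

/-- every partition `p` of a finite nonempty set admits an
orthogonal partition; concretely, choosing a representative in each block of
`p` and taking the partition consisting of the block of all representatives
together with singletons for the remaining elements yields a partition
orthogonal to `p`. -/
theorem stmt8 {X : Type*} [Fintype X] [DecidableEq X] [Nonempty X] (p : Partn X) :
    (∃ q : Partn X, Orth p q) ∧
    ∀ rep : Finset X → X, (∀ b ∈ p.parts, rep b ∈ b) →
      Orth p (@Finpartition.ofSetoid X _ _
        ⟨fun i j => i = j ∨ (i ∈ p.parts.image rep ∧ j ∈ p.parts.image rep),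
         ⟨fun i => Or.inl rfl,
          fun h => by tauto,
          fun h h' => by rcases h with rfl | h <;> rcases h' with rfl | h' <;> tauto⟩⟩
        (Classical.decRel _)) := by
  
  classical
  have H : ∀ rep : Finset X → X, (∀ b ∈ p.parts, rep b ∈ b) →
      Orth p (@Finpartition.ofSetoid X _ _
        ⟨fun i j => i = j ∨ (i ∈ p.parts.image rep ∧ j ∈ p.parts.image rep),
         ⟨fun i => Or.inl rfl,
          fun h => by tauto,
          fun h h' => by rcases h with rfl | h <;> rcases h' with rfl | h' <;> tauto⟩⟩
        (Classical.decRel _)) := by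
    intro rep hrep
    refine orth_key p rep hrep _ _ (fun i j => ?_)
    exact Iff.rfl
  refine ⟨?_, H⟩
  have hrep : ∀ b ∈ p.parts,
      (fun b => if h : b.Nonempty then h.choose else Classical.arbitrary X) b ∈ b := by
    intro b hb
    have hne := p.nonempty_of_mem_parts hb
    simp only [hne, dif_pos]
    exact hne.choose_spec
  exact ⟨_, H _ hrep⟩
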